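/- arXiv:1901.02207 — 2 statements merged into one kernel-verified Lean document; each statement's English description precedes it below -/
import Mathlib

section
/- Let M be a monoid satisfying the identities x² ≈ x³, x·y²·x ≈ (xy)², x·y·t·x·z₁²···z_n²·y ≈ y·x·t·x·z₁²···z_n²·y, and x·z₁²···z_n²·y·t·x·y ≈ x·z₁²···z_n²·y·t·y·x (for all n ≥ 0). Then for any elements z₁, …, z_r of M and any transposition of adjacent indices i, i+1, one has (z₁⋯z_i z_{i+1}⋯z_r)² = (z₁⋯z_{i+1} z_i⋯z_r)². Consequently, the square (z₁⋯z_r)² is invariant under any permutation of the factors z₁, …, z_r. -/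
/-- In a monoid satisfying x² ≈ x³, xy²x ≈ (xy)², xytxz₁²⋯z_n²y ≈ yxtxz₁²⋯z_n²y and
xz₁²⋯z_n²ytxy ≈ xz₁²⋯z_n²ytyx, the square of a product is invariant under swapping
two adjacent factors, hence under any permutation of the factors. -/
theorem square_perm_invariant {M : Type*} [Monoid M]
    (h1 : ∀ x : M, x ^ 2 = x ^ 3)
    (h2 : ∀ x y : M, x * y ^ 2 * x = (x * y) ^ 2)
    (h3 : ∀ (x y t : M) (zs : List M),
      x * y * t * x * (zs.map (· ^ 2)).prod * y =
      y * x * t * x * (zs.map (· ^ 2)).prod * y)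
    (h4 : ∀ (x y t : M) (zs : List M),
      x * (zs.map (· ^ 2)).prod * y * t * x * y =
      x * (zs.map (· ^ 2)).prod * y * t * y * x) :
    (∀ (p q : List M) (zi zj : M),
      (p.prod * zi * zj * q.prod) ^ 2 = (p.prod * zj * zi * q.prod) ^ 2) ∧
    (∀ L L' : List M, L.Perm L' → (L.prod) ^ 2 = (L'.prod) ^ 2) := by
  have key : ∀ a b x y : M, (a * x * y * b) ^ 2 = (a * y * x * b) ^ 2 := by
    intro a b x y
    have e3 := h3 x y (b * a) []
    have e4 := h4 y x (b * a) []
    simp only [List.map_nil, List.prod_nil, mul_one] at e3 e4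
    calc (a * x * y * b) ^ 2 = a * (x * y * (b * a) * x * y) * b := by
          simp [pow_two, mul_assoc]
      _ = a * (y * x * (b * a) * x * y) * b := by rw [e3]
      _ = a * (y * x * (b * a) * y * x) * b := by rw [e4]
      _ = (a * y * x * b) ^ 2 := by simp [pow_two, mul_assoc]
  constructor
  · intro p q zi zj
    exact key _ _ _ _
  · intro L L' hp
    induction hp with
    | nil => rfl
    | cons z _ ih =>
        simp only [List.prod_cons]
        rw [← h2, ← h2, ih]
    | swap x y l =>
        simpa [mul_assoc] using key 1 l.prod y x
    | trans _ _ ih1 ih2 => exact ih1.trans ih2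
end

section
/- Let M be a monoid satisfying the identities x² ≈ x³ and x·y²·x ≈ (xy)² ≈ (xy)²·x ≈ y·x²·y ≈ (yx)². Then for any elements z₁, …, z_r of M and any z equal to some z_j, one has z·(z₁⋯z_r)² = (z₁⋯z_r)² = (z₁⋯z_r)²·z. More generally, if w is a product of squares of elements each lying in {z₁, …, z_r}, then w·(z₁⋯z_r)² = (z₁⋯z_r)² = (z₁⋯z_r)²·w. -/
/-- In a monoid satisfying x² ≈ x³ and xy²x ≈ (xy)² ≈ (xy)²x ≈ yx²y ≈ (yx)²,
any square of a product absorbs (on either side) each of its factors, and more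
generally any product of squares of elements drawn from its factors. -/
theorem square_absorbs {M : Type*} [Monoid M]
    (h1 : ∀ x : M, x ^ 2 = x ^ 3)
    (h2 : ∀ x y : M, x * y ^ 2 * x = (x * y) ^ 2 ∧ (x * y) ^ 2 = (x * y) ^ 2 * x ∧
      (x * y) ^ 2 * x = y * x ^ 2 * y ∧ y * x ^ 2 * y = (y * x) ^ 2) :
    (∀ (zs : List M) (z : M), z ∈ zs →
      z * (zs.prod) ^ 2 = (zs.prod) ^ 2 ∧ (zs.prod) ^ 2 = (zs.prod) ^ 2 * z) ∧
    (∀ (zs ws : List M),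
      (∀ u ∈ ws, ∃ L : List M, (∀ a ∈ L, a ∈ zs) ∧ u = (L.prod) ^ 2) →
      ws.prod * (zs.prod) ^ 2 = (zs.prod) ^ 2 ∧
      (zs.prod) ^ 2 = (zs.prod) ^ 2 * ws.prod) := by
  have sand : ∀ x y : M, x * y ^ 2 * x = (x * y) ^ 2 := fun x y => (h2 x y).1
  have r1 : ∀ x y : M, (x * y) ^ 2 * x = (x * y) ^ 2 := fun x y => ((h2 x y).2.1).symm
  have comm : ∀ x y : M, (x * y) ^ 2 = (y * x) ^ 2 := by
    intro x y
    have h := h2 x y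
    rw [h.2.1, h.2.2.1, h.2.2.2]
  have r2 : ∀ x y : M, (x * y) ^ 2 * y = (x * y) ^ 2 := by
    intro x y; rw [comm x y, r1 y x]
  have l2 : ∀ x y : M, y * (x * y) ^ 2 = (x * y) ^ 2 := by
    intro x y
    have h : y * (x * y) ^ 2 = (y * x) ^ 2 * y := by simp [sq, mul_assoc]
    rw [h, r1 y x, ← comm]
  have l1 : ∀ x y : M, x * (x * y) ^ 2 = (x * y) ^ 2 := by
    intro x y
    have h : x * (y * x) ^ 2 = (x * y) ^ 2 * x := by simp [sq, mul_assoc]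
    rw [comm x y, h, r1]
    exact comm x y
  -- the core computation
  have key : ∀ A z B : M, z * (A * (z * B)) ^ 2 = (A * (z * B)) ^ 2 ∧
      (A * (z * B)) ^ 2 = (A * (z * B)) ^ 2 * z := by
    intro A z B
    set P := A * (z * B) with hP
    set e := P ^ 2 with he
    set f := (z * P) ^ 2 with hf
    have assoc1 : (z * A * z) * B = z * P := by rw [hP]; simp [mul_assoc]
    have fB : f * B = f := by
      have h := r2 (z * A * z) B
      rwa [assoc1] at h
    have Bf : B * f = f := by
      have h := l2 (z * A * z) B
      rwa [assoc1] at h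
    have zf : z * f = f := l1 z P
    have Pf : P * f = f := l2 z P
    have eA : (A * z) * e = e := by
      have h := l1 (A * z) B
      have hx : (A * z) * B = P := by rw [hP]; simp [mul_assoc]
      rwa [hx] at h
    have eB : e * (z * B) = e := by
      have h := r2 A (z * B)
      rwa [← hP] at h
    have zez : z * e * z = f := by
      rw [he, hf]; exact sand z P
    have ez_Af : e * z = A * f := by
      calc e * z = ((A * z) * e) * z := by rw [eA]
        _ = A * (z * e * z) := by simp [mul_assoc]
        _ = A * f := by rw [zez]
    have e_Af : e = A * f := by
      calc e = e * (z * B) := eB.symm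
        _ = (e * z) * B := by simp [mul_assoc]
        _ = (A * f) * B := by rw [ez_Af]
        _ = A * (f * B) := by simp [mul_assoc]
        _ = A * f := by rw [fB]
    have f_e : f = e := by
      calc f = P * f := Pf.symm
        _ = A * (z * (B * f)) := by rw [hP]; simp [mul_assoc]
        _ = A * (z * f) := by rw [Bf]
        _ = A * f := by rw [zf]
        _ = e := e_Af.symm
    constructor
    · calc z * e = z * (e * (z * B)) := by rw [eB]
        _ = (z * e * z) * B := by simp [mul_assoc]
        _ = f * B := by rw [zez]
        _ = f := fB
        _ = e := f_e
    · rw [ez_Af, ← e_Af]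
  have part1 : ∀ (zs : List M) (z : M), z ∈ zs →
      z * (zs.prod) ^ 2 = (zs.prod) ^ 2 ∧ (zs.prod) ^ 2 = (zs.prod) ^ 2 * z := by
    intro zs z hz
    obtain ⟨s, t, rfl⟩ := List.append_of_mem hz
    have hprod : (s ++ z :: t).prod = s.prod * (z * t.prod) := by
      simp [List.prod_append]
    rw [hprod]
    exact key s.prod z t.prod
  refine ⟨part1, ?_⟩
  intro zs ws hws
  -- absorption of arbitrary products of elements of zs
  have absorbL : ∀ L : List M, (∀ a ∈ L, a ∈ zs) →
      L.prod * (zs.prod) ^ 2 = (zs.prod) ^ 2 := by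
    intro L
    induction L with
    | nil => intro _; simp
    | cons c t ih =>
      intro h
      have hc := (part1 zs c (h c (by simp))).1
      have ht := ih (fun a ha => h a (by simp [ha]))
      rw [List.prod_cons, mul_assoc, ht, hc]
  have absorbR : ∀ L : List M, (∀ a ∈ L, a ∈ zs) →
      (zs.prod) ^ 2 * L.prod = (zs.prod) ^ 2 := by
    intro L
    induction L with
    | nil => intro _; simp
    | cons c t ih =>
      intro h
      have hc := (part1 zs c (h c (by simp))).2
      have ht := ih (fun a ha => h a (by simp [ha]))
      rw [List.prod_cons, ← mul_assoc, ← hc, ht]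
  -- squares of such products absorb as well
  have uL : ∀ u ∈ ws, u * (zs.prod) ^ 2 = (zs.prod) ^ 2 ∧
      (zs.prod) ^ 2 * u = (zs.prod) ^ 2 := by
    intro u hu
    obtain ⟨L, hL, rfl⟩ := hws u hu
    constructor
    · rw [pow_two L.prod, mul_assoc, absorbL L hL, absorbL L hL]
    · rw [pow_two L.prod, ← mul_assoc, absorbR L hL, absorbR L hL]
  clear hws
  constructor
  · induction ws with
    | nil => simp
    | cons u t ih =>
      have ht := ih (fun v hv => uL v (by simp [hv]))
      have hu := (uL u (by simp)).1
      rw [List.prod_cons, mul_assoc, ht, hu]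
  · induction ws with
    | nil => simp
    | cons u t ih =>
      have ht := ih (fun v hv => uL v (by simp [hv]))
      have hu := (uL u (by simp)).2
      rw [List.prod_cons, ← mul_assoc, hu]
      exact ht
end
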